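/- Let r : [0,1] → ℝ be continuous and suppose the right derivative r'₊(z) = lim_{ε↓0} (r(z+ε) − r(z))/ε exists for every z ∈ [0,1). Then for all s,t ∈ [0,1] with s < t there exists z ∈ [s,t) such that r'₊(z) ≥ (r(t) − r(s))/(t − s). -/

import Mathlib

open Filter Topology

/-- The hypothesis on forward difference quotients gives a right derivative in the
`HasDerivWithinAt` sense. -/
lemma stmt2_aux (r : ℝ → ℝ) (r' : ℝ → ℝ) (z : ℝ)
    (h : Tendsto (fun ε => (r (z + ε) - r z) / ε) (𝓝[>] 0) (𝓝 (r' z))) :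
    HasDerivWithinAt r (r' z) (Set.Ici z) z := by
  have hIoi : HasDerivWithinAt r (r' z) (Set.Ioi z) z := by
    rw [hasDerivWithinAt_iff_tendsto_slope]
    have hmap : Tendsto (fun y : ℝ => y - z) (𝓝[>] z) (𝓝[>] (0:ℝ)) := by
      apply tendsto_nhdsWithin_of_tendsto_nhds_of_eventually_within
      · have h0 : Tendsto (fun y : ℝ => y - z) (𝓝 z) (𝓝 (z - z)) :=
          (tendsto_id (x := 𝓝 z)).sub_const z
        simpa using h0.mono_left nhdsWithin_le_nhds
      · filter_upwards [self_mem_nhdsWithin] with y hy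
        exact sub_pos.2 (show z < y from hy)
    have hcomp : Tendsto ((fun ε => (r (z + ε) - r z) / ε) ∘ fun y => y - z) (𝓝[>] z)
        (𝓝 (r' z)) := h.comp hmap
    have hT : Tendsto (slope r z) (𝓝[>] z) (𝓝 (r' z)) := by
      refine hcomp.congr' ?_
      filter_upwards [self_mem_nhdsWithin] with y hy
      simp only [Function.comp, slope_def_field, show z + (y - z) = y by ring]
    rwa [show Set.Ioi z \ {z} = Set.Ioi z from
      Set.diff_singleton_eq_self (by simp)]
  exact hIoi.Ici_of_Ioi

theorem stmt2 (r : ℝ → ℝ) (hr : ContinuousOn r (Set.Icc 0 1)) (r' : ℝ → ℝ)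
    (hd : ∀ z ∈ Set.Ico (0 : ℝ) 1,
      Tendsto (fun ε => (r (z + ε) - r z) / ε) (𝓝[>] 0) (𝓝 (r' z))) :
    ∀ s ∈ Set.Icc (0 : ℝ) 1, ∀ t ∈ Set.Icc (0 : ℝ) 1, s < t →
      ∃ z ∈ Set.Ico s t, (r t - r s) / (t - s) ≤ r' z := by
  intro s hs t ht hst
  by_contra hcon
  push_neg at hcon
  set C : ℝ := (r t - r s) / (t - s) with hC
  have hts : (0:ℝ) < t - s := sub_pos.2 hst
  set f : ℝ → ℝ := fun x => r x - C * x with hf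
  have hsub : Set.Icc s t ⊆ Set.Icc (0:ℝ) 1 := Set.Icc_subset_Icc hs.1 ht.2
  have hsub' : Set.Ico s t ⊆ Set.Ico (0:ℝ) 1 := Set.Ico_subset_Ico hs.1 ht.2
  have hfc : ContinuousOn f (Set.Icc s t) :=
    (hr.mono hsub).sub (continuousOn_const.mul continuousOn_id)
  have hfd : ∀ x ∈ Set.Ico s t, HasDerivWithinAt f (r' x - C) (Set.Ici x) x := by
    intro x hx
    have h1 := (stmt2_aux r r' x (hd x (hsub' hx))).sub
      ((hasDerivWithinAt_id x (Set.Ici x)).const_mul C)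
    rw [mul_one] at h1
    exact h1
  have hmono : ∀ a ∈ Set.Icc s t, ∀ x ∈ Set.Icc a t, f x ≤ f a := by
    intro a ha x hx
    refine image_le_of_deriv_right_le_deriv_boundary
      (f := f) (f' := fun x => r' x - C) (B := fun _ => f a) (B' := fun _ => 0)
      (hfc.mono (Set.Icc_subset_Icc ha.1 le_rfl))
      (fun y hy => hfd y ⟨le_trans ha.1 hy.1, hy.2⟩)
      le_rfl continuousOn_const (fun y _ => hasDerivWithinAt_const y _ (f a))
      (fun y hy => ?_) hx
    exact sub_nonpos.2 (hcon y ⟨le_trans ha.1 hy.1, hy.2⟩).le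
  have hs' : s ∈ Set.Ico s t := ⟨le_rfl, hst⟩
  have hneg : r' s - C < 0 := sub_neg.2 (hcon s hs')
  have hfreq : ∃ᶠ z in 𝓝[>] s, slope f s z < 0 :=
    (hfd s hs').liminf_right_slope_le hneg
  have hmem : Set.Ioo s t ∈ 𝓝[>] s := Ioo_mem_nhdsGT_of_mem ⟨le_rfl, hst⟩
  obtain ⟨z, hz1, hz2⟩ := (hfreq.and_eventually (eventually_of_mem hmem (fun _ h => h))).exists
  have hfz : f z < f s := by
    rw [slope_def_field] at hz1
    have hzpos : 0 < z - s := sub_pos.2 hz2.1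
    rcases div_neg_iff.1 hz1 with ⟨h1, h2⟩ | ⟨h1, h2⟩
    · linarith
    · linarith
  have hft : f t = f s := by
    simp only [hf]
    field_simp [hC]
    have hCt : C * (t - s) = r t - r s := by rw [hC]; exact div_mul_cancel₀ _ hts.ne'
    linear_combination -hCt
  have : f t ≤ f z := hmono z ⟨hz2.1.le, hz2.2.le⟩ t ⟨hz2.2.le, le_rfl⟩
  linarith
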